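/- Let L be a real symmetric N×N matrix with orthonormal eigenvectors v⁽¹⁾, ..., v⁽ᴺ⁾ and eigenvalues λ_j ∈ [0, 2], let 0 < c < √2, and define ζ_j ∈ [0, π) by cos(ζ_j) = 1 − c²λ_j/2. Suppose u(t) satisfies the recurrence u(t) = 2u(t−1) − u(t−2) − c²·L·u(t−1) for t ≥ 1 with u(−1) = u(0) = u₀. Then for all t ≥ 0, u(t) = Σ_{j=1}^N (u₀ᵀv⁽ʲ⁾)·(p_j·e^{itζ_j} + q_j·e^{−itζ_j})·v⁽ʲ⁾, where p_j = (1 + i·tan(ζ_j/2))/2 and q_j = (1 − i·tan(ζ_j/2))/2. -/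
import Mathlib


open Matrix

/- Auxiliary lemmas -/

private lemma wave_aux_span {N : ℕ} (v : Fin N → Fin N → ℝ)
    (horth : ∀ i k, v i ⬝ᵥ v k = if i = k then 1 else 0)
    (x : Fin N → ℝ) (l : Fin N) : ∑ j, (x ⬝ᵥ v j) * v j l = x l := by
  have h1 : (Matrix.of v) * (Matrix.of v)ᵀ = 1 := by
    ext i k
    simpa [Matrix.mul_apply, dotProduct, Matrix.one_apply] using horth i k
  have h2 : (Matrix.of v)ᵀ * (Matrix.of v) = 1 := mul_eq_one_comm.mp h1
  have h3 := congrArg (fun M => (M.mulVec x) l) h2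
  simp only [Matrix.one_mulVec] at h3
  calc ∑ j, (x ⬝ᵥ v j) * v j l = ∑ j, ∑ m, x m * v j m * v j l := by
        simp [dotProduct, Finset.sum_mul]
    _ = ∑ m, ∑ j, x m * v j m * v j l := Finset.sum_comm
    _ = x l := by
        rw [← h3]
        simp [Matrix.mulVec, Matrix.mul_apply, dotProduct, Finset.sum_mul]
        congr 1; ext m; congr 1; ext j; ring

private lemma wave_aux_trig (z : ℝ) (h : z ∈ Set.Ico 0 Real.pi) :
    Real.cos z + Real.tan (z/2) * Real.sin z = 1 := by
  have hc : 0 < Real.cos (z/2) := by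
    apply Real.cos_pos_of_mem_Ioo
    constructor <;> [linarith [h.1, Real.pi_pos]; linarith [h.2]]
  rw [Real.tan_eq_sin_div_cos]
  have hsub := Real.cos_sub z (z/2)
  have : z - z/2 = z/2 := by ring
  rw [this] at hsub
  field_simp
  linarith [hsub]

private lemma wave_aux_expI (z : ℝ) :
    Complex.exp (Complex.I * z) = (Real.cos z : ℂ) + (Real.sin z : ℂ) * Complex.I := by
  rw [mul_comm, Complex.exp_mul_I]
  simp [Complex.ofReal_cos, Complex.ofReal_sin]

private lemma wave_aux_expI' (z : ℝ) :
    Complex.exp (-(Complex.I * z)) = (Real.cos z : ℂ) - (Real.sin z : ℂ) * Complex.I := by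
  have h : -(Complex.I * z) = ((-z : ℝ) : ℂ) * Complex.I := by push_cast; ring
  rw [h, Complex.exp_mul_I]
  simp [Complex.ofReal_cos, Complex.ofReal_sin]
  ring

private lemma wave_aux_wm1 (z : ℝ) (T : ℝ) (hid : Real.cos z + T * Real.sin z = 1) :
    ((1 + Complex.I * (T:ℝ)) / 2) * Complex.exp (-(Complex.I * (z:ℝ)))
      + ((1 - Complex.I * (T:ℝ)) / 2) * Complex.exp (Complex.I * (z:ℝ)) = 1 := by
  rw [wave_aux_expI, wave_aux_expI']
  have hid' : ((Real.cos z : ℂ)) + (T:ℂ) * (Real.sin z : ℂ) = 1 := by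
    exact_mod_cast congrArg (fun r : ℝ => (r : ℂ)) hid
  linear_combination hid' - ((T:ℂ) * (Real.sin z : ℂ)) * Complex.I_sq

private lemma wave_aux_exp_zpow (z : ℝ) (t : ℤ) :
    Complex.exp (Complex.I * t * z) = (Complex.exp (Complex.I * z))^t := by
  have h : Complex.I * t * (z : ℂ) = (t : ℤ) * (Complex.I * z) := by push_cast; ring
  rw [h, Complex.exp_int_mul]

private lemma wave_aux_wrec (e : ℂ) (he : e ≠ 0) (p q : ℂ) (t : ℤ) :
    p * e^t + q * e^(-t)
      = (e + e⁻¹) * (p * e^(t-1) + q * e^(-(t-1))) - (p * e^(t-2) + q * e^(-(t-2))) := by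
  have ht : e ^ t ≠ 0 := zpow_ne_zero t he
  simp only [zpow_sub₀ he, _root_.zpow_neg, zpow_one, zpow_two]
  field_simp
  ring

private lemma wave_aux_proj {N : ℕ} (L : Matrix (Fin N) (Fin N) ℝ) (hLsym : Lᵀ = L)
    (v : Fin N → ℝ) (lam : ℝ) (heig : L.mulVec v = lam • v)
    (x : Fin N → ℝ) (c : ℝ) (y z : Fin N → ℝ)
    (h : x = 2 • y - z - c ^ 2 • L.mulVec y) :
    x ⬝ᵥ v = (2 - c^2 * lam) * (y ⬝ᵥ v) - z ⬝ᵥ v := by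
  have hL : (L.mulVec y) ⬝ᵥ v = lam * (y ⬝ᵥ v) := by
    rw [dotProduct_comm, Matrix.dotProduct_mulVec, ← Matrix.mulVec_transpose, hLsym, heig]
    rw [dotProduct_comm]
    simp [smul_dotProduct, smul_eq_mul, dotProduct_comm v y]
  rw [h]
  simp only [sub_dotProduct, smul_dotProduct, smul_eq_mul, two_smul,
    add_dotProduct, hL]
  ring

/-- Closed-form solution of the discrete wave equation on a graph with symmetric
Laplacian L, zero initial velocity (u(−1) = u(0) = u₀) and wave speed 0 < c < √2. -/
theorem discrete_wave_equation_closed_form {N : ℕ}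
    (L : Matrix (Fin N) (Fin N) ℝ) (hLsym : Lᵀ = L)
    (v : Fin N → Fin N → ℝ) (lam : Fin N → ℝ)
    (horth : ∀ i k, v i ⬝ᵥ v k = if i = k then 1 else 0)
    (heig : ∀ j, L.mulVec (v j) = lam j • v j)
    (hlam : ∀ j, lam j ∈ Set.Icc (0 : ℝ) 2)
    (c : ℝ) (hc0 : 0 < c) (hc2 : c < Real.sqrt 2)
    (ζ : Fin N → ℝ) (hζrange : ∀ j, ζ j ∈ Set.Ico 0 Real.pi)
    (hζ : ∀ j, Real.cos (ζ j) = 1 - c ^ 2 * lam j / 2)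
    (p q : Fin N → ℂ)
    (hp : ∀ j, p j = (1 + Complex.I * (Real.tan (ζ j / 2) : ℝ)) / 2)
    (hq : ∀ j, q j = (1 - Complex.I * (Real.tan (ζ j / 2) : ℝ)) / 2)
    (u₀ : Fin N → ℝ) (u : ℤ → Fin N → ℝ)
    (hinit0 : u (-1) = u₀) (hinit1 : u 0 = u₀)
    (hrec : ∀ t : ℤ, 1 ≤ t →
      u t = 2 • u (t - 1) - u (t - 2) - c ^ 2 • L.mulVec (u (t - 1))) :
    ∀ t : ℤ, 0 ≤ t → ∀ l : Fin N,
      ((u t l : ℂ)) = ∑ j, ((u₀ ⬝ᵥ v j : ℝ) : ℂ) *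
        (p j * Complex.exp (Complex.I * (t : ℤ) * (ζ j : ℝ)) +
         q j * Complex.exp (-(Complex.I * (t : ℤ) * (ζ j : ℝ)))) * ((v j l : ℝ) : ℂ) := by
  -- the complex "eigen-oscillation"
  set E : Fin N → ℂ := fun j => Complex.exp (Complex.I * (ζ j : ℝ)) with hE
  have hEne : ∀ j, E j ≠ 0 := fun j => Complex.exp_ne_zero _
  set W : Fin N → ℤ → ℂ := fun j s => p j * (E j)^s + q j * (E j)^(-s) with hWdef
  have hW0 : ∀ j, W j 0 = 1 := by
    intro j
    simp only [hWdef, zpow_zero, neg_zero, mul_one, hp, hq]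
    ring
  have hWm1 : ∀ j, W j (-1) = 1 := by
    intro j
    have hid := wave_aux_trig (ζ j) (hζrange j)
    have key := wave_aux_wm1 (ζ j) (Real.tan (ζ j / 2)) hid
    simp only [hWdef, hE, hp, hq]
    rw [show ((E j)^(-1:ℤ) : ℂ) = (E j)⁻¹ from zpow_neg_one (E j),
        show ((E j)^(-(-1):ℤ) : ℂ) = E j by norm_num]
    rw [hE, ← Complex.exp_neg]
    exact key
  have hWrec : ∀ j (t : ℤ),
      W j t = ((2 - c^2 * lam j : ℝ) : ℂ) * W j (t-1) - W j (t-2) := by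
    intro j t
    have hsum : E j + (E j)⁻¹ = ((2 - c^2 * lam j : ℝ) : ℂ) := by
      rw [hE]
      simp only
      rw [← Complex.exp_neg, wave_aux_expI, wave_aux_expI']
      have h2 : (2 - c^2 * lam j : ℝ) = 2 * Real.cos (ζ j) := by rw [hζ j]; ring
      rw [h2]
      push_cast
      ring
    rw [hWdef]
    simp only
    rw [← hsum]
    exact wave_aux_wrec (E j) (hEne j) (p j) (q j) t
  have hproj : ∀ j (s : ℤ), 1 ≤ s →
      u s ⬝ᵥ v j = (2 - c^2 * lam j) * (u (s-1) ⬝ᵥ v j) - u (s-2) ⬝ᵥ v j := by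
    intro j s hs
    exact wave_aux_proj L hLsym (v j) (lam j) (heig j) (u s) c (u (s-1)) (u (s-2)) (hrec s hs)
  -- main claim by two-step induction
  have main : ∀ j (n : ℕ),
      (((u ((n:ℤ)-1) ⬝ᵥ v j : ℝ)) : ℂ) = ((u₀ ⬝ᵥ v j : ℝ) : ℂ) * W j ((n:ℤ)-1) ∧
      (((u (((n:ℕ)+1:ℤ)-1) ⬝ᵥ v j : ℝ)) : ℂ) = ((u₀ ⬝ᵥ v j : ℝ) : ℂ) * W j (((n:ℕ)+1:ℤ)-1) := by
    intro j n
    induction n with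
    | zero =>
      constructor
      · norm_num
        rw [hinit0, hWm1 j, mul_one]
      · norm_num
        rw [hinit1, hW0 j, mul_one]
    | succ m ihm =>
      refine ⟨?_, ?_⟩
      · have := ihm.2
        convert this using 3 <;> push_cast <;> ring
      · have e1 : (((m+1:ℕ):ℤ)+1) - 1 = ((m:ℤ)+1) := by push_cast; ring
        rw [e1]
        have hs : (1:ℤ) ≤ (m:ℤ)+1 := by omega
        have hp1 := hproj j ((m:ℤ)+1) hs
        have e2 : (m:ℤ)+1-1 = (((m:ℕ)+1:ℤ))-1 := by push_cast; ring
        have e3 : (m:ℤ)+1-2 = ((m:ℕ):ℤ)-1 := by push_cast; ring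
        rw [e2, e3] at hp1
        have ih1 := ihm.2
        have ih0 := ihm.1
        have hwr := hWrec j ((m:ℤ)+1)
        rw [e2, e3] at hwr
        rw [hp1]
        push_cast
        rw [ih1, ih0, hwr]
        push_cast
        ring
  -- assemble
  intro t ht l
  lift t to ℕ using ht with n
  have h1 : (u (n:ℤ) l : ℝ) = ∑ j, (u (n:ℤ) ⬝ᵥ v j) * v j l :=
    (wave_aux_span v horth (u (n:ℤ)) l).symm
  calc ((u (n:ℤ) l : ℝ) : ℂ)
      = ∑ j, ((u (n:ℤ) ⬝ᵥ v j : ℝ) : ℂ) * ((v j l : ℝ) : ℂ) := by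
        rw [h1]; push_cast; ring
    _ = ∑ j, ((u₀ ⬝ᵥ v j : ℝ) : ℂ) * W j (n:ℤ) * ((v j l : ℝ) : ℂ) := by
        apply Finset.sum_congr rfl
        intro j _
        have hm := (main j n).2
        have e : (((n:ℕ)+1:ℤ)) - 1 = (n:ℤ) := by push_cast; ring
        rw [e] at hm
        rw [hm]
    _ = ∑ j, ((u₀ ⬝ᵥ v j : ℝ) : ℂ) *
        (p j * Complex.exp (Complex.I * ((n:ℤ) : ℂ) * (ζ j : ℝ)) +
         q j * Complex.exp (-(Complex.I * ((n:ℤ) : ℂ) * (ζ j : ℝ)))) * ((v j l : ℝ) : ℂ) := by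
        apply Finset.sum_congr rfl
        intro j _
        congr 2
        show p j * (Complex.exp (Complex.I * (ζ j : ℝ)))^((n:ℕ):ℤ)
            + q j * (Complex.exp (Complex.I * (ζ j : ℝ)))^(-((n:ℕ):ℤ)) = _
        rw [_root_.zpow_neg, ← wave_aux_exp_zpow (ζ j) ((n:ℕ):ℤ), ← Complex.exp_neg]
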